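/- For all real v, r > 0, α a positive real not a nonnegative integer, and m a nonnegative integer, ∑_{l=0}^m (αr + l(v+α)) · (Γ(l-α)/Γ(l+1)) · (Γ(l+r)/Γ(v+1+l+r)) = -(Γ(m+1+r)/Γ(m+1)) · (Γ(m+1-α)/Γ(v+m+r+1)). -/

import Mathlib

/-- Lemma 1.2: finite sum identity for Gamma quotients. -/
theorem stmt1 (v r α : ℝ) (hv : 0 < v) (hr : 0 < r) (hα : 0 < α)
    (hαn : ∀ n : ℕ, α ≠ n) (m : ℕ) :
    ∑ l ∈ Finset.range (m + 1),
      (α * r + l * (v + α)) * (Real.Gamma (l - α) / Real.Gamma (l + 1)) *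
        (Real.Gamma (l + r) / Real.Gamma (v + 1 + l + r))
    = -(Real.Gamma (m + 1 + r) / Real.Gamma (m + 1)) *
        (Real.Gamma (m + 1 - α) / Real.Gamma (v + m + r + 1)) := by
  have hΓ : ∀ x : ℝ, 0 < x → Real.Gamma x ≠ 0 := fun x hx => (Real.Gamma_pos_of_pos hx).ne'
  induction m with
  | zero =>
    simp only [Finset.sum_range_one, Finset.sum_range_succ, Finset.sum_range_zero, Nat.cast_zero]
    have h1 : Real.Gamma ((0:ℝ) + 1 + r) = r * Real.Gamma r := by
      rw [show (0:ℝ)+1+r = r+1 by ring, Real.Gamma_add_one hr.ne']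
    have h2 : Real.Gamma ((0:ℝ) + 1 - α) = -α * Real.Gamma (-α) := by
      rw [show (0:ℝ)+1-α = -α+1 by ring,
        Real.Gamma_add_one (neg_ne_zero.mpr hα.ne')]
    have h3 : v + (0:ℝ) + r + 1 = v + 1 + 0 + r := by ring
    rw [h1, h2, h3, show (0:ℝ)+1 = 1 by ring, Real.Gamma_one]
    have hd : Real.Gamma (v + 1 + 0 + r) ≠ 0 := hΓ _ (by linarith)
    field_simp
    ring
  | succ m ih =>
    rw [Finset.sum_range_succ, ih]
    push_cast
    have hm1 : (0:ℝ) < (m:ℝ) + 1 := by positivity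
    have hA : Real.Gamma ((m:ℝ) + 1 + 1 + r) = ((m:ℝ)+1+r) * Real.Gamma ((m:ℝ)+1+r) := by
      rw [show (m:ℝ)+1+1+r = ((m:ℝ)+1+r)+1 by ring, Real.Gamma_add_one (by linarith)]
    have hB : Real.Gamma ((m:ℝ) + 1 + 1) = ((m:ℝ)+1) * Real.Gamma ((m:ℝ)+1) := by
      rw [show (m:ℝ)+1+1 = ((m:ℝ)+1)+1 by ring, Real.Gamma_add_one hm1.ne']
    have hαm : (m:ℝ) + 1 - α ≠ 0 := by
      intro h
      exact hαn (m+1) (by push_cast; linarith)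
    have hC : Real.Gamma ((m:ℝ) + 1 + 1 - α) = ((m:ℝ)+1-α) * Real.Gamma ((m:ℝ)+1-α) := by
      rw [show (m:ℝ)+1+1-α = ((m:ℝ)+1-α)+1 by ring, Real.Gamma_add_one hαm]
    have hD : Real.Gamma (v + ((m:ℝ) + 1) + r + 1) = (v+(m:ℝ)+r+1) * Real.Gamma (v+(m:ℝ)+r+1) := by
      rw [show v+((m:ℝ)+1)+r+1 = (v+(m:ℝ)+r+1)+1 by ring, Real.Gamma_add_one (by positivity)]
    have hE : Real.Gamma (v + 1 + ((m:ℝ) + 1) + r) = (v+(m:ℝ)+r+1) * Real.Gamma (v+(m:ℝ)+r+1) := by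
      rw [show v+1+((m:ℝ)+1)+r = (v+(m:ℝ)+r+1)+1 by ring, Real.Gamma_add_one (by positivity)]
    rw [hA, hB, hC, hD, hE]
    have h1 : Real.Gamma ((m:ℝ)+1) ≠ 0 := hΓ _ (by positivity)
    have h2 : Real.Gamma (v+(m:ℝ)+r+1) ≠ 0 := hΓ _ (by positivity)
    have h3 : v+(m:ℝ)+r+1 ≠ 0 := by positivity
    field_simp
    ring
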